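/- The metric g = dx₁² + e^{2x₁}dx₂² + e^{−2x₁}dx₃² on ℝ³ (the geometry Sol) is an expanding Ricci soliton: with E = −4x₃ ∂/∂x₃ − 2 ∂/∂x₁ and A = 2, one has −2 Ricci(g) = L_E g + 2Ag. Moreover this soliton structure is not of gradient type: E♭ is not closed. -/

import Mathlib

open scoped BigOperators

noncomputable section

/-- Partial derivative of `f` in the `i`-th coordinate direction. -/
def pd {n : ℕ} (f : (Fin n → ℝ) → ℝ) (i : Fin n) (x : Fin n → ℝ) : ℝ :=
  fderiv ℝ f x (Pi.single i 1)

/-- Pointwise inverse of a metric (the components `g^{ij}`). -/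
def ginv {n : ℕ} (g : (Fin n → ℝ) → Matrix (Fin n) (Fin n) ℝ) (x : Fin n → ℝ) :
    Matrix (Fin n) (Fin n) ℝ := (g x)⁻¹

/-- Christoffel symbols `Γ^k_{ij}` of the metric `g`. -/
def christoffel {n : ℕ} (g : (Fin n → ℝ) → Matrix (Fin n) (Fin n) ℝ)
    (k i j : Fin n) (x : Fin n → ℝ) : ℝ :=
  (1 / 2) * ∑ l, ginv g x k l *
    (pd (fun y => g y l j) i x + pd (fun y => g y l i) j x - pd (fun y => g y i j) l x)

/-- The Ricci tensor in coordinates: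
`Ric_{ij} = ∂_k Γ^k_{ij} − ∂_i Γ^k_{kj} + Γ^k_{kl} Γ^l_{ij} − Γ^k_{il} Γ^l_{kj}`. -/
def ricci {n : ℕ} (g : (Fin n → ℝ) → Matrix (Fin n) (Fin n) ℝ)
    (i j : Fin n) (x : Fin n → ℝ) : ℝ :=
  (∑ k, pd (christoffel g k i j) k x) - (∑ k, pd (christoffel g k k j) i x)
    + (∑ k, ∑ l, christoffel g k k l x * christoffel g l i j x)
    - ∑ k, ∑ l, christoffel g k i l x * christoffel g l k j x

/-- Lie derivative of the metric:
`(L_E g)_{ij} = E^k ∂_k g_{ij} + g_{kj} ∂_i E^k + g_{ik} ∂_j E^k`. -/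
def lieD {n : ℕ} (g : (Fin n → ℝ) → Matrix (Fin n) (Fin n) ℝ)
    (E : (Fin n → ℝ) → Fin n → ℝ) (i j : Fin n) (x : Fin n → ℝ) : ℝ :=
  (∑ k, E x k * pd (fun y => g y i j) k x)
    + (∑ k, g x k j * pd (fun y => E y k) i x)
    + ∑ k, g x i k * pd (fun y => E y k) j x

/-- The dual 1-form `E♭ = g(E,·)`. -/
def flat {n : ℕ} (g : (Fin n → ℝ) → Matrix (Fin n) (Fin n) ℝ)
    (E : (Fin n → ℝ) → Fin n → ℝ) (j : Fin n) (x : Fin n → ℝ) : ℝ :=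
  ∑ k, g x j k * E x k

/-- The Sol metric `g = dx₁² + e^{2x₁} dx₂² + e^{−2x₁} dx₃²` on `ℝ³`. -/
def solMetric (x : Fin 3 → ℝ) : Matrix (Fin 3) (Fin 3) ℝ :=
  Matrix.diagonal ![1, Real.exp (2 * x 0), Real.exp (-(2 * x 0))]

/-- The soliton flow on Sol: `E = −2 ∂/∂x₁ − 4x₃ ∂/∂x₃`. -/
def solFlow (x : Fin 3 → ℝ) : Fin 3 → ℝ :=
  ![-2, 0, -(4 * x 2)]

set_option linter.unreachableTactic false
set_option linter.unusedTactic false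

lemma pd_const {n : ℕ} (c : ℝ) (i : Fin n) (x : Fin n → ℝ) : pd (fun _ => c) i x = 0 := by
  simp [pd]

lemma hasf_exp (c : ℝ) (x : Fin 3 → ℝ) :
    HasFDerivAt (fun y : Fin 3 → ℝ => Real.exp (c * y 0))
      ((c * Real.exp (c * x 0)) • ContinuousLinearMap.proj (R := ℝ) (φ := fun _ : Fin 3 => ℝ) 0) x := by
  have h1 : HasFDerivAt (fun y : Fin 3 → ℝ => c * y 0)
      (c • ContinuousLinearMap.proj (R := ℝ) (φ := fun _ : Fin 3 => ℝ) 0) x :=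
    ((ContinuousLinearMap.proj (R := ℝ) (φ := fun _ : Fin 3 => ℝ) 0).hasFDerivAt (x := x)).const_mul c
  have := h1.exp
  simpa [smul_smul, mul_comm] using this

lemma pd_exp2 (i : Fin 3) (x : Fin 3 → ℝ) :
    pd (fun y => Real.exp (2 * y 0)) i x = (Pi.single i 1 : Fin 3 → ℝ) 0 * (2 * Real.exp (2 * x 0)) := by
  rw [pd, (hasf_exp 2 x).fderiv]
  simp [mul_comm]

lemma pd_expm2 (i : Fin 3) (x : Fin 3 → ℝ) :
    pd (fun y => Real.exp (-(2 * y 0))) i x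
      = (Pi.single i 1 : Fin 3 → ℝ) 0 * (-2 * Real.exp (-(2 * x 0))) := by
  have h := hasf_exp (-2) x
  have e : (fun y : Fin 3 → ℝ => Real.exp (-2 * y 0)) = fun y => Real.exp (-(2 * y 0)) := by
    funext y; ring_nf
  rw [pd]
  rw [e] at h
  rw [h.fderiv]
  simp [mul_comm]

lemma pd_negexp2 (i : Fin 3) (x : Fin 3 → ℝ) :
    pd (fun y => -Real.exp (2 * y 0)) i x
      = -((Pi.single i 1 : Fin 3 → ℝ) 0 * (2 * Real.exp (2 * x 0))) := by
  have h := (hasf_exp 2 x).fun_neg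
  rw [pd, h.fderiv]
  simp [mul_comm]

lemma pd_lin (i : Fin 3) (x : Fin 3 → ℝ) :
    pd (fun y => -(4 * y 2)) i x = -(4 * (Pi.single i 1 : Fin 3 → ℝ) 2) := by
  have h1 : HasFDerivAt (fun y : Fin 3 → ℝ => -(4 * y 2))
      ((-4 : ℝ) • ContinuousLinearMap.proj (R := ℝ) (φ := fun _ : Fin 3 => ℝ) 2) x := by
    have h2 := ((ContinuousLinearMap.proj (R := ℝ) (φ := fun _ : Fin 3 => ℝ) 2).hasFDerivAt (x := x)).const_mul (-4:ℝ)
    have e : (fun y : Fin 3 → ℝ => (-4:ℝ) * y 2) = fun y => -(4 * y 2) := by funext y; ring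
    have h3 : HasFDerivAt (fun y : Fin 3 → ℝ => (-4:ℝ) * y 2)
        ((-4:ℝ) • ContinuousLinearMap.proj (R := ℝ) (φ := fun _ : Fin 3 => ℝ) 2) x := h2
    rwa [e] at h3
  rw [pd, h1.fderiv]
  simp

lemma pd_flat2aux (i : Fin 3) (x : Fin 3 → ℝ) :
    pd (fun y => Real.exp (-(2 * y 0)) * (-(4 * y 2))) i x
      = Real.exp (-(2 * x 0)) * (-(4 * (Pi.single i 1 : Fin 3 → ℝ) 2))
        + (-(4 * x 2)) * ((Pi.single i 1 : Fin 3 → ℝ) 0 * (-2 * Real.exp (-(2 * x 0)))) := by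
  have hf := hasf_exp (-2) x
  have ef : (fun y : Fin 3 → ℝ => Real.exp (-2 * y 0)) = fun y => Real.exp (-(2 * y 0)) := by
    funext y; ring_nf
  rw [ef] at hf
  have hg : HasFDerivAt (fun y : Fin 3 → ℝ => -(4 * y 2))
      ((-4 : ℝ) • ContinuousLinearMap.proj (R := ℝ) (φ := fun _ : Fin 3 => ℝ) 2) x := by
    have h2 := ((ContinuousLinearMap.proj (R := ℝ) (φ := fun _ : Fin 3 => ℝ) 2).hasFDerivAt (x := x)).const_mul (-4:ℝ)
    have h3 : HasFDerivAt (fun y : Fin 3 → ℝ => (-4:ℝ) * y 2)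
        ((-4:ℝ) • ContinuousLinearMap.proj (R := ℝ) (φ := fun _ : Fin 3 => ℝ) 2) x := h2
    have e : (fun y : Fin 3 → ℝ => (-4:ℝ) * y 2) = fun y => -(4 * y 2) := by funext y; ring
    rwa [e] at h3
  have h := hf.fun_mul hg
  rw [pd, h.fderiv]
  simp
  left; ring


lemma ginv_sol (x : Fin 3 → ℝ) :
    ginv solMetric x = Matrix.diagonal ![1, Real.exp (-(2 * x 0)), Real.exp (2 * x 0)] := by
  rw [ginv, solMetric]
  apply Matrix.inv_eq_right_inv
  rw [Matrix.diagonal_mul_diagonal]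
  convert Matrix.diagonal_one with i
  fin_cases i <;> simp [← Real.exp_add]

def Gam : Fin 3 → Fin 3 → Fin 3 → (Fin 3 → ℝ) → ℝ :=
![![![fun _ => 0, fun _ => 0, fun _ => 0],
   ![fun _ => 0, fun x => -Real.exp (2 * x 0), fun _ => 0],
   ![fun _ => 0, fun _ => 0, fun x => Real.exp (-(2 * x 0))]],
  ![![fun _ => 0, fun _ => 1, fun _ => 0],
   ![fun _ => 1, fun _ => 0, fun _ => 0],
   ![fun _ => 0, fun _ => 0, fun _ => 0]],
  ![![fun _ => 0, fun _ => 0, fun _ => -1],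
   ![fun _ => 0, fun _ => 0, fun _ => 0],
   ![fun _ => -1, fun _ => 0, fun _ => 0]]]

lemma christoffel_eq (k i j : Fin 3) : christoffel solMetric k i j = Gam k i j := by
  funext x
  fin_cases k <;> fin_cases i <;> fin_cases j <;>
    (simp [christoffel, ginv_sol, Gam, Fin.sum_univ_three, solMetric, Matrix.diagonal_apply,
      Matrix.vecHead, Matrix.vecTail, pd_const, pd_exp2, pd_expm2, Pi.single_apply]
     <;> ring_nf <;> simp [← Real.exp_add] <;> try ring)

lemma part1 : ∀ (x : Fin 3 → ℝ) (i j : Fin 3),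
    -2 * ricci solMetric i j x = lieD solMetric solFlow i j x + 2 * 2 * solMetric x i j := by
  intro x i j
  fin_cases i <;> fin_cases j <;>
    (simp [ricci, lieD, Fin.sum_univ_three, christoffel_eq, Gam, solMetric, solFlow,
       Matrix.diagonal_apply, Matrix.vecHead, Matrix.vecTail,
       pd_const, pd_exp2, pd_expm2, pd_negexp2, pd_lin, Pi.single_apply]
     <;> ring_nf <;> simp [← Real.exp_add] <;> try ring)

lemma flat0 : flat solMetric solFlow 0 = fun _ => (-2 : ℝ) := by
  funext x
  simp [flat, Fin.sum_univ_three, solMetric, solFlow, Matrix.diagonal_apply,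
    Matrix.vecHead, Matrix.vecTail]

lemma flat2 : flat solMetric solFlow 2 = fun x => Real.exp (-(2 * x 0)) * (-(4 * x 2)) := by
  funext x
  simp [flat, Fin.sum_univ_three, solMetric, solFlow, Matrix.diagonal_apply,
    Matrix.vecHead, Matrix.vecTail]


/-- Sol is an expanding Ricci soliton: with
`E = −4x₃ ∂/∂x₃ − 2 ∂/∂x₁` and `A = 2` one has `−2 Ricci(g) = L_E g + 2Ag`; moreover this
soliton structure is not of gradient type: `E♭` is not closed. -/
theorem sol_is_expanding_nongradient_soliton :
    (∀ (x : Fin 3 → ℝ) (i j : Fin 3),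
      -2 * ricci solMetric i j x =
        lieD solMetric solFlow i j x + 2 * 2 * solMetric x i j) ∧
    ¬(∀ (x : Fin 3 → ℝ) (i j : Fin 3),
        pd (flat solMetric solFlow j) i x - pd (flat solMetric solFlow i) j x = 0) := by
  refine ⟨part1, ?_⟩
  intro h
  have h8 := h ![0, 0, 1] 0 2
  rw [flat0, flat2, pd_flat2aux, pd_const] at h8
  simp [Pi.single_apply] at h8
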